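/- arXiv:1307.8242 — 2 statements merged into one kernel-verified Lean document; each statement's English description precedes it below -/
import Mathlib

section
/- (Upper bound on the ℓ¹-ℓ² value function) Define J(x,u) = ‖Gu − Hx‖₂² + μ‖u‖₁ + xᵀQx and V(x) = min over u ∈ ℝᴺ of J(x,u), where μ > 0, Q ≻ 0, G has full column rank. Then for all x ∈ ℝⁿ, λ_min(Q)‖x‖₂² ≤ V(x) ≤ a₁‖x‖₂ + (a₂ + λ_max(Q))‖x‖₂², where a₁ = μ√N · σ_max(G†H), a₂ = λ_max(W*), G† = (GᵀG)⁻¹Gᵀ, W* = Hᵀ(I−GG†)H, and σ_max denotes the largest singular value. -/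
open Matrix

theorem Matrix.isHermitian_transpose_mul_self {m n α : Type*} [Fintype m] [CommSemiring α]
    [StarRing α] [TrivialStar α] (A : Matrix m n α) : (Aᵀ * A).IsHermitian := by
  rw [IsHermitian, conjTranspose_eq_transpose_of_trivial, transpose_mul, transpose_transpose]

private lemma dot_mulVec_self' {a b : ℕ} (M : Matrix (Fin a) (Fin b) ℝ) (x : Fin b → ℝ) :
    (M *ᵥ x) ⬝ᵥ (M *ᵥ x) = x ⬝ᵥ ((Mᵀ * M) *ᵥ x) := by
  rw [← mulVec_mulVec, dotProduct_mulVec, ← vecMul_transpose, mulVec_transpose,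
    dotProduct_comm]

private lemma rayleigh_aux' {n : ℕ} {A : Matrix (Fin n) (Fin n) ℝ} (hA : A.IsHermitian)
    (x : Fin n → ℝ) : ∃ y : Fin n → ℝ, x ⬝ᵥ x = ∑ i, (y i) ^ 2 ∧
      x ⬝ᵥ A *ᵥ x = ∑ i, hA.eigenvalues i * (y i) ^ 2 := by
  set U : Matrix (Fin n) (Fin n) ℝ := (hA.eigenvectorUnitary : Matrix (Fin n) (Fin n) ℝ)
    with hUdef
  have hU : U * Uᵀ = 1 := by
    rw [← conjTranspose_eq_transpose_of_trivial, ← star_eq_conjTranspose]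
    exact (Matrix.mem_unitaryGroup_iff).mp hA.eigenvectorUnitary.2
  have hspec : A = U * diagonal hA.eigenvalues * Uᵀ := by
    have := hA.spectral_theorem
    rw [Unitary.conjStarAlgAut_apply, star_eq_conjTranspose,
      conjTranspose_eq_transpose_of_trivial] at this
    simpa using this
  refine ⟨Uᵀ *ᵥ x, ?_, ?_⟩
  · have h := dot_mulVec_self' Uᵀ x
    rw [transpose_transpose, hU, one_mulVec] at h
    rw [← h]
    simp [dotProduct, sq]
  · have h2 : x ⬝ᵥ A *ᵥ x = (Uᵀ *ᵥ x) ⬝ᵥ (diagonal hA.eigenvalues) *ᵥ (Uᵀ *ᵥ x) := by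
      conv_lhs => rw [hspec]
      rw [← mulVec_mulVec, ← mulVec_mulVec, dotProduct_mulVec, ← mulVec_transpose]
    rw [h2]
    simp only [dotProduct, mulVec_diagonal]
    exact Finset.sum_congr rfl fun i _ => by ring

private lemma rayleigh_le' {n : ℕ} [NeZero n] {A : Matrix (Fin n) (Fin n) ℝ}
    (hA : A.IsHermitian) (x : Fin n → ℝ) :
    x ⬝ᵥ A *ᵥ x ≤ (⨆ i, hA.eigenvalues i) * (x ⬝ᵥ x) := by
  obtain ⟨y, h1, h2⟩ := rayleigh_aux' hA x
  rw [h1, h2, Finset.mul_sum]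
  exact Finset.sum_le_sum fun i _ =>
    mul_le_mul_of_nonneg_right
      (le_ciSup (Set.Finite.bddAbove (Set.finite_range _)) i) (sq_nonneg _)

private lemma rayleigh_ge' {n : ℕ} [NeZero n] {A : Matrix (Fin n) (Fin n) ℝ}
    (hA : A.IsHermitian) (x : Fin n → ℝ) :
    (⨅ i, hA.eigenvalues i) * (x ⬝ᵥ x) ≤ x ⬝ᵥ A *ᵥ x := by
  obtain ⟨y, h1, h2⟩ := rayleigh_aux' hA x
  rw [h1, h2, Finset.mul_sum]
  exact Finset.sum_le_sum fun i _ =>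
    mul_le_mul_of_nonneg_right
      (ciInf_le (Set.Finite.bddBelow (Set.finite_range _)) i) (sq_nonneg _)

theorem l1l2_value_function_bounds (m N n : ℕ) [NeZero N] [NeZero n]
    (G : Matrix (Fin m) (Fin N) ℝ) (H : Matrix (Fin m) (Fin n) ℝ)
    (Q : Matrix (Fin n) (Fin n) ℝ) (hQ : Q.PosDef)
    (μ : ℝ) (hμ : 0 < μ) (hG : IsUnit (Gᵀ * G))
    (hWs : (Hᵀ * (1 - G * ((Gᵀ * G)⁻¹ * Gᵀ)) * H).IsHermitian)
    (J : (Fin n → ℝ) → (Fin N → ℝ) → ℝ)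
    (hJ : ∀ x u, J x u =
      (G *ᵥ u - H *ᵥ x) ⬝ᵥ (G *ᵥ u - H *ᵥ x) + μ * ∑ i, |u i| + x ⬝ᵥ (Q *ᵥ x))
    (V : (Fin n → ℝ) → ℝ)
    (hVle : ∀ x u, V x ≤ J x u)
    (hVmin : ∀ x, ∃ u, V x = J x u)
    (x : Fin n → ℝ) :
    (⨅ i, hQ.1.eigenvalues i) * (∑ i, (x i) ^ 2) ≤ V x ∧
    V x ≤
      (μ * Real.sqrt N *
        Real.sqrt (⨆ i,
          (Matrix.isHermitian_transpose_mul_self (((Gᵀ * G)⁻¹ * Gᵀ) * H)).eigenvalues i)) *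
          Real.sqrt (∑ i, (x i) ^ 2) +
      ((⨆ i, hWs.eigenvalues i) + (⨆ i, hQ.1.eigenvalues i)) * (∑ i, (x i) ^ 2) := by
  have hxx : x ⬝ᵥ x = ∑ i, (x i) ^ 2 := by simp [dotProduct, sq]
  constructor
  · -- lower bound
    obtain ⟨u, hu⟩ := hVmin x
    have h1 : (⨅ i, hQ.1.eigenvalues i) * (x ⬝ᵥ x) ≤ x ⬝ᵥ Q *ᵥ x := rayleigh_ge' hQ.1 x
    have h2 : 0 ≤ (G *ᵥ u - H *ᵥ x) ⬝ᵥ (G *ᵥ u - H *ᵥ x) :=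
      Finset.sum_nonneg fun i _ => mul_self_nonneg _
    have h3 : 0 ≤ ∑ i, |u i| := Finset.sum_nonneg fun i _ => abs_nonneg _
    have h4 : 0 ≤ μ * ∑ i, |u i| := mul_nonneg hμ.le h3
    rw [hu, hJ]
    rw [hxx] at h1
    linarith
  · -- upper bound
    set B : Matrix (Fin N) (Fin N) ℝ := (Gᵀ * G)⁻¹ with hB
    set M : Matrix (Fin N) (Fin n) ℝ := (B * Gᵀ) * H with hM
    set u₀ : Fin N → ℝ := M *ᵥ x with hu₀
    have hdetG : IsUnit (Gᵀ * G).det := (Matrix.isUnit_iff_isUnit_det _).mp hG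
    set P : Matrix (Fin m) (Fin m) ℝ := G * (B * Gᵀ) with hP
    have hPsymm : Pᵀ = P := by
      rw [hP, hB, transpose_mul, transpose_mul, transpose_transpose,
        transpose_nonsing_inv, transpose_mul, transpose_transpose, Matrix.mul_assoc]
    have hPP : P * P = P := by
      rw [hP]
      simp only [Matrix.mul_assoc]
      rw [← Matrix.mul_assoc Gᵀ G (B * Gᵀ), ← Matrix.mul_assoc B (Gᵀ * G) (B * Gᵀ),
        hB, Matrix.nonsing_inv_mul _ hdetG, Matrix.one_mul]
    -- residual
    have hres : G *ᵥ u₀ - H *ᵥ x = ((P - 1) * H) *ᵥ x := by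
      rw [hu₀, mulVec_mulVec, hM, hP, Matrix.sub_mul, Matrix.one_mul,
        Matrix.sub_mulVec]
      simp only [Matrix.mul_assoc]
    have hWkey : ((P - 1) * H)ᵀ * ((P - 1) * H) = Hᵀ * (1 - P) * H := by
      rw [transpose_mul, transpose_sub, transpose_one, hPsymm, Matrix.mul_assoc,
        Matrix.mul_assoc, ← Matrix.mul_assoc (P - 1) (P - 1) H]
      have h5 : (P - 1) * (P - 1) = 1 - P := by
        have : (P - 1) * (P - 1) = P * P - P - P + 1 := by noncomm_ring
        rw [this, hPP]; abel
      rw [h5]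
    have hresbound : (G *ᵥ u₀ - H *ᵥ x) ⬝ᵥ (G *ᵥ u₀ - H *ᵥ x) ≤
        (⨆ i, hWs.eigenvalues i) * (x ⬝ᵥ x) := by
      rw [hres, dot_mulVec_self', hWkey]
      exact rayleigh_le' hWs x
    -- l1 term
    have hMherm := Matrix.isHermitian_transpose_mul_self M
    have hMeig : x ⬝ᵥ (Mᴴ * M) *ᵥ x ≤ (⨆ i, hMherm.eigenvalues i) * (x ⬝ᵥ x) :=
      rayleigh_le' hMherm x
    have hu₀sq : ∑ i, (u₀ i) ^ 2 = x ⬝ᵥ (Mᴴ * M) *ᵥ x := by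
      rw [conjTranspose_eq_transpose_of_trivial, ← dot_mulVec_self', hu₀]
      simp [dotProduct, sq]
    have hsupM : 0 ≤ ⨆ i, hMherm.eigenvalues i :=
      le_trans (Matrix.eigenvalues_conjTranspose_mul_self_nonneg M (Classical.arbitrary _))
        (le_ciSup (Set.Finite.bddAbove (Set.finite_range _)) _)
    have hxx0 : (0:ℝ) ≤ x ⬝ᵥ x := Finset.sum_nonneg fun i _ => mul_self_nonneg _
    have hl2 : Real.sqrt (∑ i, (u₀ i) ^ 2) ≤
        Real.sqrt (⨆ i, hMherm.eigenvalues i) * Real.sqrt (x ⬝ᵥ x) := by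
      rw [← Real.sqrt_mul hsupM]
      exact Real.sqrt_le_sqrt (by rw [hu₀sq]; exact hMeig)
    have hl1 : ∑ i, |u₀ i| ≤ Real.sqrt N * Real.sqrt (∑ i, (u₀ i) ^ 2) := by
      have h := sq_sum_le_card_mul_sum_sq (s := Finset.univ) (f := fun i => |u₀ i|)
      calc ∑ i, |u₀ i| = Real.sqrt ((∑ i, |u₀ i|) ^ 2) :=
            (Real.sqrt_sq (Finset.sum_nonneg fun i _ => abs_nonneg _)).symm
        _ ≤ Real.sqrt ((N : ℝ) * ∑ i, (u₀ i) ^ 2) := by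
            apply Real.sqrt_le_sqrt
            simpa [sq_abs] using h
        _ = Real.sqrt N * Real.sqrt (∑ i, (u₀ i) ^ 2) :=
            Real.sqrt_mul (Nat.cast_nonneg _) _
    -- Q term
    have hQle : x ⬝ᵥ Q *ᵥ x ≤ (⨆ i, hQ.1.eigenvalues i) * (x ⬝ᵥ x) := rayleigh_le' hQ.1 x
    -- combine
    have hmain := hVle x u₀
    rw [hJ] at hmain
    have hB2 : μ * ∑ i, |u₀ i| ≤
        μ * Real.sqrt N * Real.sqrt (⨆ i, hMherm.eigenvalues i) * Real.sqrt (x ⬝ᵥ x) := by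
      have := hl1.trans (mul_le_mul_of_nonneg_left hl2 (Real.sqrt_nonneg (N:ℝ)))
      calc μ * ∑ i, |u₀ i| ≤ μ * (Real.sqrt N * (Real.sqrt (⨆ i, hMherm.eigenvalues i) *
            Real.sqrt (x ⬝ᵥ x))) := mul_le_mul_of_nonneg_left this hμ.le
        _ = μ * Real.sqrt N * Real.sqrt (⨆ i, hMherm.eigenvalues i) * Real.sqrt (x ⬝ᵥ x) := by
            ring
    rw [hxx] at hresbound hB2 hQle
    calc V x ≤ _ := hmain
      _ ≤ _ := by linarith
end

section
/- (Closed-loop contraction under bounded additive perturbation) Let A ∈ ℝ^{n×n}, B ∈ ℝⁿ, Q ≻ 0, and P ≻ 0 satisfying P = AᵀPA − AᵀPB(BᵀPB)⁻¹BᵀPA + Q, with K = −(BᵀPB)⁻¹BᵀPA and ρ = 1 − λ_min(QP⁻¹) ∈ [0,1). If a trajectory satisfies x_{i+1} = (A+BK)x_i + B·w_i with (BᵀPB)|w_i|² ≤ δ for all i, then ‖x_i‖_P² ≤ ρⁱ‖x₀‖_P² + δ·(1−ρⁱ)/(1−ρ) for all i ≥ 0. -/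
open Matrix

section OldSqrt
open scoped ComplexOrder

/-- The matrix square root of a positive semidefinite matrix, as defined in the older
Mathlib (`Matrix.PosSemidef.sqrt`, removed since). -/
noncomputable def Matrix.PosSemidef.sqrt {n 𝕜 : Type*} [Fintype n] [DecidableEq n] [RCLike 𝕜]
    {A : Matrix n n 𝕜} (hA : A.PosSemidef) : Matrix n n 𝕜 :=
  hA.1.eigenvectorUnitary.1 * diagonal ((↑) ∘ Real.sqrt ∘ hA.1.eigenvalues) *
  (star hA.1.eigenvectorUnitary : Matrix n n 𝕜)

theorem Matrix.PosSemidef.posSemidef_sqrt {n 𝕜 : Type*} [Fintype n] [DecidableEq n] [RCLike 𝕜]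
    {A : Matrix n n 𝕜} (hA : A.PosSemidef) : PosSemidef hA.sqrt := by
  apply PosSemidef.mul_mul_conjTranspose_same
  refine posSemidef_diagonal_iff.mpr fun i ↦ ?_
  rw [Function.comp_apply, RCLike.nonneg_iff]
  constructor
  · simp only [RCLike.ofReal_re]
    exact Real.sqrt_nonneg _
  · simp only [RCLike.ofReal_im]

end OldSqrt

/-- The matrix `P^{-1/2} Q P^{-1/2}` is Hermitian; its eigenvalues coincide with
those of `Q P⁻¹`. -/
noncomputable def sqrtInvConjHermitian {n : ℕ} (P Q : Matrix (Fin n) (Fin n) ℝ)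
    (hP : P.PosDef) (hQ : Q.PosDef) :
    ((hP.posSemidef.sqrt)⁻¹ * Q * (hP.posSemidef.sqrt)⁻¹).IsHermitian := by
  have hS : ((hP.posSemidef.sqrt)⁻¹).IsHermitian :=
    hP.posSemidef.posSemidef_sqrt.isHermitian.inv
  have := Matrix.isHermitian_mul_mul_conjTranspose ((hP.posSemidef.sqrt)⁻¹) hQ.1
  rwa [hS.eq] at this

lemma herm_dot {n : ℕ} {T : Matrix (Fin n) (Fin n) ℝ} (hT : T.IsHermitian)
    (v w : Fin n → ℝ) : v ⬝ᵥ (T *ᵥ w) = (T *ᵥ v) ⬝ᵥ w := by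
  rw [dotProduct_mulVec, ← mulVec_transpose]
  rw [← conjTranspose_eq_transpose_of_trivial, hT.eq]

lemma vecMulVec_mulVec' {n : ℕ} (a b y : Fin n → ℝ) :
    vecMulVec a b *ᵥ y = (b ⬝ᵥ y) • a := by
  ext i
  simp only [mulVec, vecMulVec_apply, dotProduct, Pi.smul_apply, smul_eq_mul]
  rw [Finset.sum_mul]
  exact Finset.sum_congr rfl fun j _ => by ring

lemma inf_eig_quad_le {n : ℕ} [NeZero n] {M : Matrix (Fin n) (Fin n) ℝ}
    (hM : M.IsHermitian) (z : Fin n → ℝ) :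
    (⨅ i, hM.eigenvalues i) * (z ⬝ᵥ z) ≤ z ⬝ᵥ (M *ᵥ z) := by
  set U : Matrix (Fin n) (Fin n) ℝ := (hM.eigenvectorUnitary : Matrix (Fin n) (Fin n) ℝ) with hUdef
  have hU1 : star U * U = 1 := (mem_unitaryGroup_iff').mp hM.eigenvectorUnitary.2
  have hU2 : U * star U = 1 := (mem_unitaryGroup_iff).mp hM.eigenvectorUnitary.2
  set u : Fin n → ℝ := star U *ᵥ z with hu
  have hz : U *ᵥ u = z := by rw [hu, mulVec_mulVec, hU2, one_mulVec]
  have hstar : star U = Uᵀ := by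
    rw [Matrix.star_eq_conjTranspose, conjTranspose_eq_transpose_of_trivial]
  have h1 : z ⬝ᵥ z = u ⬝ᵥ u := by
    conv_lhs => rw [← hz]
    rw [dotProduct_mulVec, ← mulVec_transpose, ← hstar, mulVec_mulVec, hU1, one_mulVec]
  have h2 : z ⬝ᵥ (M *ᵥ z) = ∑ i, hM.eigenvalues i * (u i * u i) := by
    conv_lhs => rw [hM.spectral_theorem]
    rw [Unitary.conjStarAlgAut_apply, ← mulVec_mulVec, ← mulVec_mulVec, dotProduct_mulVec, ← mulVec_transpose, ← hstar, ← hu]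
    simp only [dotProduct, mulVec_diagonal, Function.comp_apply, RCLike.ofReal_real_eq_id, id_eq]
    exact Finset.sum_congr rfl fun i _ => by ring
  rw [h1, h2, dotProduct, Finset.mul_sum]
  refine Finset.sum_le_sum fun i _ => ?_
  exact mul_le_mul_of_nonneg_right
    (ciInf_le (Set.Finite.bddBelow (Set.finite_range _)) i) (mul_self_nonneg _)

theorem closed_loop_contraction_bounded_perturbation (n : ℕ) [NeZero n]
    (A : Matrix (Fin n) (Fin n) ℝ) (B : Fin n → ℝ) (hB : B ≠ 0)
    (P Q : Matrix (Fin n) (Fin n) ℝ) (hP : P.PosDef) (hQ : Q.PosDef)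
    (hric : P = Aᵀ * P * A
      - (B ⬝ᵥ (P *ᵥ B))⁻¹ • vecMulVec (Aᵀ *ᵥ (P *ᵥ B)) ((B ᵥ* P) ᵥ* A) + Q)
    (K : Fin n → ℝ) (hK : K = -((B ⬝ᵥ (P *ᵥ B))⁻¹ • ((B ᵥ* P) ᵥ* A)))
    (δ : ℝ) (hδ : 0 ≤ δ)
    (w : ℕ → ℝ) (hw : ∀ i, (B ⬝ᵥ (P *ᵥ B)) * (w i) ^ 2 ≤ δ)
    (x : ℕ → Fin n → ℝ)
    (hx : ∀ i, x (i + 1) = (A + vecMulVec B K) *ᵥ x i + w i • B) :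
    let ρ : ℝ := 1 - ⨅ i, (sqrtInvConjHermitian P Q hP hQ).eigenvalues i
    ∀ i : ℕ,
      x i ⬝ᵥ (P *ᵥ x i) ≤ ρ ^ i * (x 0 ⬝ᵥ (P *ᵥ x 0)) + δ * (1 - ρ ^ i) / (1 - ρ) := by
  intro ρ
  set s : ℝ := B ⬝ᵥ (P *ᵥ B) with hsdef
  have hs : 0 < s := by simpa using hP.dotProduct_mulVec_pos hB
  set S : Matrix (Fin n) (Fin n) ℝ := hP.posSemidef.sqrt with hSdef
  have hSh : S.IsHermitian := hP.posSemidef.posSemidef_sqrt.isHermitian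
  have hSS : S * S = P := by
    have hU1 : star (hP.posSemidef.1.eigenvectorUnitary : Matrix (Fin n) (Fin n) ℝ) * (hP.posSemidef.1.eigenvectorUnitary : Matrix (Fin n) (Fin n) ℝ) = 1 :=
      (mem_unitaryGroup_iff').mp hP.posSemidef.1.eigenvectorUnitary.2
    have hspec := hP.posSemidef.1.spectral_theorem
    rw [Unitary.conjStarAlgAut_apply] at hspec
    rw [hSdef, Matrix.PosSemidef.sqrt]
    simp only [Matrix.mul_assoc]
    rw [← Matrix.mul_assoc (star _) (hP.posSemidef.1.eigenvectorUnitary : Matrix (Fin n) (Fin n) ℝ), hU1,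
      Matrix.one_mul, ← Matrix.mul_assoc (diagonal _) (diagonal _), diagonal_mul_diagonal]
    conv_rhs => rw [hspec]
    rw [Matrix.mul_assoc]
    congr 2
    congr 1
    funext i
    simp [Real.mul_self_sqrt (hP.posSemidef.eigenvalues_nonneg i)]
  have hSdet : IsUnit S.det := by
    have h : S.det * S.det = P.det := by rw [← det_mul, hSS]
    have hne : S.det ≠ 0 := by
      intro h0
      rw [h0, mul_zero] at h
      exact hP.det_pos.ne' h.symm
    exact hne.isUnit
  have hSinvS : S⁻¹ * S = 1 := nonsing_inv_mul _ hSdet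
  have hSSinv : S * S⁻¹ = 1 := mul_nonsing_inv _ hSdet
  have hSinvh : (S⁻¹).IsHermitian := hSh.inv
  set N : Matrix (Fin n) (Fin n) ℝ := S⁻¹ * Q * S⁻¹ with hNdef
  have hN : N.IsHermitian := sqrtInvConjHermitian P Q hP hQ
  set lam : ℝ := ⨅ i, hN.eigenvalues i with hlam
  have hρ : ρ = 1 - lam := rfl
  -- quadratic form transfers
  have key1 : ∀ y, y ⬝ᵥ (P *ᵥ y) = (S *ᵥ y) ⬝ᵥ (S *ᵥ y) := by
    intro y
    rw [← hSS, ← mulVec_mulVec, herm_dot hSh]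
  have keyN : ∀ z, z ⬝ᵥ (N *ᵥ z) = (S⁻¹ *ᵥ z) ⬝ᵥ (Q *ᵥ (S⁻¹ *ᵥ z)) := by
    intro z
    rw [hNdef, ← mulVec_mulVec, ← mulVec_mulVec, herm_dot hSinvh]
  have key0 : ∀ y, y ⬝ᵥ (Q *ᵥ y) = (S *ᵥ y) ⬝ᵥ (N *ᵥ (S *ᵥ y)) := by
    intro y
    rw [keyN, mulVec_mulVec, hSinvS, one_mulVec]
  -- t and riccati in quadratic form
  set t : (Fin n → ℝ) → ℝ := fun y => B ⬝ᵥ (P *ᵥ (A *ᵥ y)) with htdef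
  have hby : ∀ y, ((B ᵥ* P) ᵥ* A) ⬝ᵥ y = t y := by
    intro y
    rw [vecMul_vecMul, ← dotProduct_mulVec, ← mulVec_mulVec]
  have hq : ∀ y, y ⬝ᵥ (P *ᵥ y)
      = (A *ᵥ y) ⬝ᵥ (P *ᵥ (A *ᵥ y)) - s⁻¹ * (t y)^2 + y ⬝ᵥ (Q *ᵥ y) := by
    intro y
    conv_lhs => rw [hric]
    rw [add_mulVec, sub_mulVec, dotProduct_add, dotProduct_sub]
    congr 1
    congr 1
    · rw [← mulVec_mulVec, ← mulVec_mulVec, dotProduct_mulVec, vecMul_transpose, mulVec_mulVec]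
    · rw [smul_mulVec, dotProduct_smul, vecMulVec_mulVec', dotProduct_smul, hby]
      have hya : y ⬝ᵥ (Aᵀ *ᵥ (P *ᵥ B)) = t y := by
        rw [dotProduct_mulVec, vecMul_transpose, herm_dot hP.1, dotProduct_comm]
      rw [hya, smul_eq_mul, smul_eq_mul]
      ring
  -- expansion of the closed-loop quadratic form
  have quad : ∀ (y : Fin n → ℝ) (c : ℝ),
      (A *ᵥ y + c • B) ⬝ᵥ (P *ᵥ (A *ᵥ y + c • B))
        = (A *ᵥ y) ⬝ᵥ (P *ᵥ (A *ᵥ y)) + 2 * c * t y + c^2 * s := by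
    intro y c
    have hAB : (A *ᵥ y) ⬝ᵥ (P *ᵥ B) = t y := by
      rw [herm_dot hP.1, dotProduct_comm]
    rw [mulVec_add, mulVec_smul, dotProduct_add, add_dotProduct, add_dotProduct,
      dotProduct_smul, smul_dotProduct, smul_dotProduct, dotProduct_smul, hAB]
    rw [htdef]
    simp only [smul_eq_mul]
    ring
  -- P - Q is PSD in quadratic form
  have hPQ : ∀ y, y ⬝ᵥ (Q *ᵥ y) ≤ y ⬝ᵥ (P *ᵥ y) := by
    intro y
    have h0 : 0 ≤ (A *ᵥ y + (-(s⁻¹ * t y)) • B) ⬝ᵥ (P *ᵥ (A *ᵥ y + (-(s⁻¹ * t y)) • B)) := by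
      simpa using hP.posSemidef.dotProduct_mulVec_nonneg (A *ᵥ y + (-(s⁻¹ * t y)) • B)
    rw [quad y (-(s⁻¹ * t y))] at h0
    have hexp : (A *ᵥ y) ⬝ᵥ (P *ᵥ (A *ᵥ y)) + 2 * (-(s⁻¹ * t y)) * t y + (-(s⁻¹ * t y))^2 * s
        = (A *ᵥ y) ⬝ᵥ (P *ᵥ (A *ᵥ y)) - s⁻¹ * (t y)^2 := by
      field_simp
      ring
    rw [hexp] at h0
    have := hq y
    linarith
  -- N is positive definite, so lam > 0
  have hNpd : N.PosDef := by
    refine PosDef.of_dotProduct_mulVec_pos hN fun z hz => ?_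
    have hy : S⁻¹ *ᵥ z ≠ 0 := by
      intro h0
      apply hz
      have : S *ᵥ (S⁻¹ *ᵥ z) = z := by rw [mulVec_mulVec, hSSinv, one_mulVec]
      rw [h0, mulVec_zero] at this
      exact this.symm
    have := hQ.dotProduct_mulVec_pos hy
    simp only [star_trivial] at this ⊢
    rw [keyN z]
    exact this
  obtain ⟨j, hj⟩ : ∃ j, lam = hN.eigenvalues j := by
    obtain ⟨j, hj⟩ := exists_eq_ciInf_of_finite (f := fun i => hN.eigenvalues i)
    exact ⟨j, hj.symm⟩
  have hlampos : 0 < lam := hj ▸ hNpd.eigenvalues_pos j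
  -- lam ≤ 1 via eigenvector
  have hlamle : lam ≤ 1 := by
    set v : Fin n → ℝ := ⇑(hN.eigenvectorBasis j) with hv
    have hNv : N *ᵥ v = hN.eigenvalues j • v := hN.mulVec_eigenvectorBasis j
    have hvne : v ≠ 0 := by
      have := hN.eigenvectorBasis.orthonormal.ne_zero j
      intro h0
      apply this
      ext k
      exact congrFun h0 k
    have hvvnn : 0 ≤ v ⬝ᵥ v := by
      show 0 ≤ ∑ i, v i * v i
      exact Finset.sum_nonneg fun i _ => mul_self_nonneg (v i)
    have hvv : 0 < v ⬝ᵥ v := by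
      rcases lt_or_eq_of_le hvvnn with h | h
      · exact h
      · exact absurd ((dotProduct_self_eq_zero).mp h.symm) hvne
    have hvNv : v ⬝ᵥ (N *ᵥ v) ≤ v ⬝ᵥ v := by
      rw [keyN]
      have hveq : S *ᵥ (S⁻¹ *ᵥ v) = v := by rw [mulVec_mulVec, hSSinv, one_mulVec]
      calc (S⁻¹ *ᵥ v) ⬝ᵥ (Q *ᵥ (S⁻¹ *ᵥ v)) ≤ (S⁻¹ *ᵥ v) ⬝ᵥ (P *ᵥ (S⁻¹ *ᵥ v)) := hPQ _
      _ = v ⬝ᵥ v := by rw [key1, hveq]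
    rw [hNv, dotProduct_smul, smul_eq_mul] at hvNv
    calc lam = hN.eigenvalues j := hj
    _ ≤ 1 := by nlinarith
  have hρ0 : 0 ≤ ρ := by rw [hρ]; linarith
  have hρ1 : ρ < 1 := by rw [hρ]; linarith
  have h1ρ : 0 < 1 - ρ := by linarith
  -- the key eigenvalue bound: lam * (y P y) ≤ y Q y
  have lamQ : ∀ y, lam * (y ⬝ᵥ (P *ᵥ y)) ≤ y ⬝ᵥ (Q *ᵥ y) := by
    intro y
    rw [key0, key1]
    exact inf_eig_quad_le hN (S *ᵥ y)
  -- one-step bound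
  have step : ∀ i, x (i+1) ⬝ᵥ (P *ᵥ x (i+1)) ≤ ρ * (x i ⬝ᵥ (P *ᵥ x i)) + δ := by
    intro i
    have hxi : x (i+1) = A *ᵥ x i + (K ⬝ᵥ x i + w i) • B := by
      rw [hx i, add_mulVec, vecMulVec_mulVec', add_smul, add_assoc]
    have hKy : K ⬝ᵥ x i = -(s⁻¹ * t (x i)) := by
      rw [hK, neg_dotProduct, smul_dotProduct, hby, smul_eq_mul]
    have hV : x (i+1) ⬝ᵥ (P *ᵥ x (i+1))
        = (A *ᵥ x i) ⬝ᵥ (P *ᵥ (A *ᵥ x i)) - s⁻¹ * (t (x i))^2 + s * (w i)^2 := by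
      rw [hxi, quad, hKy]
      field_simp
      ring
    have hVQ := hq (x i)
    have hlq := lamQ (x i)
    have hwi := hw i
    rw [hV]
    rw [hρ]
    nlinarith [hwi]
  -- induction
  intro i
  induction i with
  | zero => simp
  | succ i ih =>
    have h1 : x (i+1) ⬝ᵥ (P *ᵥ x (i+1)) ≤ ρ * (x i ⬝ᵥ (P *ᵥ x i)) + δ := step i
    have h2 : ρ * (x i ⬝ᵥ (P *ᵥ x i)) ≤ ρ * (ρ ^ i * (x 0 ⬝ᵥ (P *ᵥ x 0)) + δ * (1 - ρ ^ i) / (1 - ρ)) :=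
      mul_le_mul_of_nonneg_left ih hρ0
    have h3 : ρ * (ρ ^ i * (x 0 ⬝ᵥ (P *ᵥ x 0)) + δ * (1 - ρ ^ i) / (1 - ρ)) + δ
        = ρ ^ (i+1) * (x 0 ⬝ᵥ (P *ᵥ x 0)) + δ * (1 - ρ ^ (i+1)) / (1 - ρ) := by
      field_simp
      ring
    calc x (i+1) ⬝ᵥ (P *ᵥ x (i+1)) ≤ ρ * (x i ⬝ᵥ (P *ᵥ x i)) + δ := h1
      _ ≤ ρ * (ρ ^ i * (x 0 ⬝ᵥ (P *ᵥ x 0)) + δ * (1 - ρ ^ i) / (1 - ρ)) + δ :=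
          add_le_add_left h2 δ
      _ = ρ ^ (i+1) * (x 0 ⬝ᵥ (P *ᵥ x 0)) + δ * (1 - ρ ^ (i+1)) / (1 - ρ) := h3
end
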